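/- Let A be a maximal monotone operator on a real Hilbert space H with p ∈ A⁻¹(0). Let β_n > 0, u_n a bounded sequence in H, α_n ∈ ℝ with |α_n| ≤ c for all n, where c < 1, and (α_n e_n) bounded. Then for every x₀ ∈ H the sequence defined by x_{n+1} = (I + β_n A)⁻¹(u_n + α_n(x_n + e_n)) is bounded. -/

import Mathlib

open scoped RealInnerProductSpace
open Filter

variable {H : Type*} [NormedAddCommGroup H] [InnerProductSpace ℝ H] [CompleteSpace H]

/-- A (possibly set-valued) operator `A : H → Set H` is monotone. -/
def IsMonotoneOp (A : H → Set H) : Prop :=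
  ∀ x₁ y₁ x₂ y₂, y₁ ∈ A x₁ → y₂ ∈ A x₂ → 0 ≤ ⟪x₁ - x₂, y₁ - y₂⟫

/-- `A` is maximal monotone: it is monotone and any pair `[x, y]` monotonically
related to the whole graph of `A` already belongs to the graph of `A`. -/
def IsMaximalMonotone (A : H → Set H) : Prop :=
  IsMonotoneOp A ∧ ∀ x y, (∀ v w, w ∈ A v → 0 ≤ ⟪v - x, w - y⟫) → y ∈ A x

/-- `J` is the resolvent `(I + βA)⁻¹` of `A`: for every `y`, `J y` satisfies
`(y - J y)/β ∈ A (J y)`, i.e. `y ∈ (I + βA)(J y)`. -/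
def IsResolvent (A : H → Set H) (β : ℝ) (J : H → H) : Prop :=
  ∀ y, β⁻¹ • (y - J y) ∈ A (J y)

/-- `p` is the metric projection of `u` onto the set `F`. -/
def IsProjection (F : Set H) (u p : H) : Prop :=
  p ∈ F ∧ ∀ q ∈ F, ‖u - p‖ ≤ ‖u - q‖

/-- If `F = A⁻¹(0)` is nonempty, `(u_n)` and `(α_n e_n)` are bounded and `|α_n| ≤ c < 1`,
then the sequence generated by the algorithm is bounded. -/
theorem stmt_2 (A : H → Set H) (hA : IsMaximalMonotone A)
    (p₀ : H) (hp₀ : (0 : H) ∈ A p₀)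
    (β : ℕ → ℝ) (hβpos : ∀ n, 0 < β n)
    (useq : ℕ → H) (hub : ∃ M, ∀ n, ‖useq n‖ ≤ M)
    (α : ℕ → ℝ) (c : ℝ) (hc : c < 1) (hαc : ∀ n, |α n| ≤ c)
    (e : ℕ → H) (hαe : ∃ M, ∀ n, ‖α n • e n‖ ≤ M)
    (J : ℕ → H → H) (hJ : ∀ n, IsResolvent A (β n) (J n))
    (x : ℕ → H) (hx : ∀ n, x (n + 1) = J n (useq n + α n • (x n + e n))) :
    ∃ M, ∀ n, ‖x n‖ ≤ M := by
  obtain ⟨Mu, hMu⟩ := hub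
  obtain ⟨Me, hMe⟩ := hαe
  have hc0 : 0 ≤ c := le_trans (abs_nonneg _) (hαc 0)
  -- resolvent is "quasi-nonexpansive" at p₀
  have hJle : ∀ n y, ‖J n y - p₀‖ ≤ ‖y - p₀‖ := by
    intro n y
    have hmono := hA.1 (J n y) ((β n)⁻¹ • (y - J n y)) p₀ 0 (hJ n y) hp₀
    have h1 : 0 ≤ ⟪J n y - p₀, y - J n y⟫ := by
      have hβ : 0 < (β n)⁻¹ := inv_pos.mpr (hβpos n)
      have : 0 ≤ (β n)⁻¹ * ⟪J n y - p₀, y - J n y⟫ := by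
        simpa [real_inner_smul_right] using hmono
      nlinarith
    have h2 : ‖J n y - p₀‖ ^ 2 ≤ ⟪J n y - p₀, y - p₀⟫ := by
      have hsplit : y - p₀ = (y - J n y) + (J n y - p₀) := by abel
      rw [hsplit, inner_add_right, ← real_inner_self_eq_norm_sq]
      linarith
    have h3 : ⟪J n y - p₀, y - p₀⟫ ≤ ‖J n y - p₀‖ * ‖y - p₀‖ := real_inner_le_norm _ _
    nlinarith [norm_nonneg (J n y - p₀), norm_nonneg (y - p₀)]
  set K : ℝ := Mu + Me + 2 * ‖p₀‖ with hK
  have hK0 : 0 ≤ K := by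
    have := le_trans (norm_nonneg _) (hMu 0)
    have := le_trans (norm_nonneg _) (hMe 0)
    positivity
  set D : ℝ := max ‖x 0‖ (K / (1 - c)) with hD
  refine ⟨D, ?_⟩
  intro n
  induction n with
  | zero => exact le_max_left _ _
  | succ n ih =>
    have key : ‖x (n + 1)‖ ≤ K + c * ‖x n‖ := by
      rw [hx n]
      have h1 : ‖J n (useq n + α n • (x n + e n)) - p₀‖
          ≤ ‖useq n + α n • (x n + e n) - p₀‖ := hJle n _
      have h2 : ‖useq n + α n • (x n + e n) - p₀‖
          ≤ ‖useq n‖ + ‖α n • e n‖ + ‖p₀‖ + |α n| * ‖x n‖ := by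
        have : useq n + α n • (x n + e n) - p₀
            = useq n + α n • e n + (-p₀) + α n • x n := by
          rw [smul_add]; abel
        rw [this]
        calc ‖useq n + α n • e n + (-p₀) + α n • x n‖
            ≤ ‖useq n + α n • e n + (-p₀)‖ + ‖α n • x n‖ := norm_add_le _ _
          _ ≤ ‖useq n‖ + ‖α n • e n‖ + ‖p₀‖ + |α n| * ‖x n‖ := by
              rw [norm_smul, Real.norm_eq_abs]
              exact add_le_add_left
                (by simpa using norm_add₃_le (a := useq n) (b := α n • e n) (c := -p₀)) _
      have h3 : ‖J n (useq n + α n • (x n + e n))‖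
          ≤ ‖J n (useq n + α n • (x n + e n)) - p₀‖ + ‖p₀‖ := by
        simpa using norm_add_le (J n (useq n + α n • (x n + e n)) - p₀) p₀
      have h4 : |α n| * ‖x n‖ ≤ c * ‖x n‖ :=
        mul_le_mul_of_nonneg_right (hαc n) (norm_nonneg _)
      have := hMu n
      have := hMe n
      simp only [hK]
      linarith
    have hDK : K ≤ (1 - c) * D := by
      have : K / (1 - c) ≤ D := le_max_right _ _
      rw [div_le_iff₀ (by linarith)] at this
      linarith [this]
    have : c * ‖x n‖ ≤ c * D := mul_le_mul_of_nonneg_left ih hc0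
    linarith
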